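/- Let p be a prime, q a power of p, h, k positive integers with p ≥ h, and let t₁, …, t_j ∈ F_q be pairwise distinct and α₁, …, α_{k−j} be elements of F_{q^h} generating F_{q^h} over F_q and lying in pairwise distinct q-Frobenius orbits. Then the hk × hk block matrix N, whose first j·h rows consist of the blocks A_{t_i} (the h rows of A_t being the vectors of coefficients (d^ℓ/dt^ℓ)(1, t, t², …, t^{hk−1}) for ℓ = 0,…,h−1) and whose remaining (k−j)·h rows are the vectors (1, α_r^{q^s}, …, α_r^{(hk−1)q^s}) for s = 0,…,h−1, is invertible. -/

import Mathlib

open Polynomial Finset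

lemma aux_fix_all (Fq K : Type) [Field Fq] [Fintype Fq] [Field K] [Fintype K] [Algebra Fq K]
    (p : ℕ) (hp : p.Prime) [CharP Fq p] [CharP K p]
    (d : ℕ) (a : K) (ha : a ^ (Fintype.card Fq) ^ d = a)
    (hgen : IntermediateField.adjoin Fq {a} = ⊤) :
    ∀ x : K, x ^ (Fintype.card Fq) ^ d = x := by
  have : Fact p.Prime := ⟨hp⟩
  obtain ⟨m, hpm, hqm⟩ := FiniteField.card Fq p
  let E : IntermediateField Fq K :=
    { carrier := {x | x ^ (Fintype.card Fq) ^ d = x}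
      mul_mem' := fun {x y} hx hy => by
        simp only [Set.mem_setOf_eq] at *; rw [mul_pow, hx, hy]
      one_mem' := by simp
      add_mem' := fun {x y} hx hy => by
        simp only [Set.mem_setOf_eq] at *
        rw [hqm, ← pow_mul, add_pow_char_pow, pow_mul, ← hqm, hx, hy]
      inv_mem' := fun x hx => by
        simp only [Set.mem_setOf_eq] at *; rw [inv_pow, hx]
      algebraMap_mem' := fun c => by
        simp only [Set.mem_setOf_eq, ← map_pow, FiniteField.pow_card_pow] }
  have haE : a ∈ E := ha
  have htop : (⊤ : IntermediateField Fq K) ≤ E := by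
    rw [← hgen]
    exact IntermediateField.adjoin_le_iff.mpr (Set.singleton_subset_iff.mpr haE)
  intro x
  exact htop (IntermediateField.mem_top)

lemma aux_card_le (K : Type) [Field K] [Fintype K] (q d : ℕ) (hq : 1 < q) (hd : d ≠ 0)
    (hfix : ∀ x : K, x ^ q ^ d = x) : Fintype.card K ≤ q ^ d := by
  classical
  have hne : (X ^ q ^ d - X : K[X]) ≠ 0 := FiniteField.X_pow_card_pow_sub_X_ne_zero K hd hq
  have hdeg : (X ^ q ^ d - X : K[X]).natDegree = q ^ d :=
    FiniteField.X_pow_card_pow_sub_X_natDegree_eq K hd hq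
  have hsub : Finset.univ.val ≤ (X ^ q ^ d - X : K[X]).roots := by
    rw [Multiset.le_iff_count]
    intro x
    by_cases hx : x ∈ (Finset.univ : Finset K).val
    · have h1 : (Finset.univ : Finset K).val.count x = 1 :=
        Multiset.count_eq_one_of_mem Finset.univ.nodup hx
      rw [h1, Multiset.one_le_count_iff_mem, mem_roots hne]
      simp [hfix x]
    · simp [Multiset.count_eq_zero_of_notMem hx]
  calc Fintype.card K = Multiset.card (Finset.univ : Finset K).val := by
        simp [Finset.card_univ]
      _ ≤ Multiset.card (X ^ q ^ d - X : K[X]).roots := Multiset.card_le_card hsub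
      _ ≤ (X ^ q ^ d - X : K[X]).natDegree := card_roots' _
      _ = q ^ d := hdeg

theorem block_matrix_osculating_conjugates_isUnit_det
    (Fq K : Type) [Field Fq] [Fintype Fq] [Field K] [Fintype K] [Algebra Fq K]
    (p h k j : ℕ) (hp : p.Prime) (hchar : ringChar Fq = p) (hph : h ≤ p)
    (hh : 2 ≤ h) (hk0 : 0 < k) (hj : j ≤ k)
    (hrank : Module.finrank Fq K = h)
    (t : Fin j → Fq) (ht : Function.Injective t)
    (α : Fin (k - j) → K)
    (hgen : ∀ r, IntermediateField.adjoin Fq {α r} = ⊤)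
    (horb : ∀ r r', r ≠ r' → ∀ s : ℕ, α r ≠ (α r') ^ (Fintype.card Fq) ^ s) :
    ∀ e : (Fin j × Fin h) ⊕ (Fin (k - j) × Fin h) ≃ Fin (h * k),
      IsUnit (Matrix.det (Matrix.of (fun a i : Fin (h * k) =>
        match e.symm a with
        | Sum.inl (x, ℓ) =>
            if (i : ℕ) < (ℓ : ℕ) then 0
            else (∏ s ∈ Finset.range (ℓ : ℕ), (((i : ℕ) - s : ℕ) : K)) *
              (algebraMap Fq K (t x)) ^ ((i : ℕ) - (ℓ : ℕ))
        | Sum.inr (r, s) =>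
            α r ^ ((i : ℕ) * (Fintype.card Fq) ^ (s : ℕ))))) := by
  intro e
  classical
  set q := Fintype.card Fq with hqdef
  have hq2 : 1 < q := Fintype.one_lt_card
  have hcharFq : CharP Fq p := hchar ▸ ringChar.charP Fq
  have halgInj : Function.Injective (algebraMap Fq K) := (algebraMap Fq K).injective
  have hcharK : CharP K p := charP_of_injective_algebraMap halgInj p
  have hcardK : Fintype.card K = q ^ h := by
    rw [Module.card_eq_pow_finrank (K := Fq) (V := K), hrank]
  have hKfix : ∀ x : K, x ^ q ^ h = x := fun x => by
    rw [← hcardK]; exact FiniteField.pow_card x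
  -- generator not fixed by small Frobenius powers
  have hgenfix : ∀ (r : Fin (k - j)) (d : ℕ), 0 < d → d < h → α r ^ q ^ d ≠ α r := by
    intro r d hd hdh heq
    have hall := aux_fix_all Fq K p hp d (α r) heq (hgen r)
    have hle := aux_card_le K q d hq2 hd.ne' hall
    rw [hcardK] at hle
    exact absurd hle (not_le.mpr (Nat.pow_lt_pow_right hq2 hdh))
  -- generators are not in the base field
  have hα_ne_base : ∀ (r : Fin (k - j)) (c : Fq), α r ≠ algebraMap Fq K c := by
    intro r c hEq
    have hbot : α r ∈ (⊥ : IntermediateField Fq K) := by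
      rw [hEq]; exact IntermediateField.algebraMap_mem ⊥ c
    have htle : (⊤ : IntermediateField Fq K) ≤ ⊥ := by
      rw [← hgen r]
      exact IntermediateField.adjoin_le_iff.mpr (Set.singleton_subset_iff.mpr hbot)
    have hbt : (⊥ : IntermediateField Fq K) = ⊤ := le_antisymm le_top (htle.trans le_rfl) |>.symm ▸ (le_antisymm (htle) bot_le).symm
    have h1 : Module.finrank Fq K = 1 := by
      rw [← IntermediateField.finrank_top', ← hbt, IntermediateField.finrank_bot]
    omega
  -- exponent arithmetic helper
  have hpowpow : ∀ (y : K) (a b : ℕ), (y ^ q ^ a) ^ q ^ b = y ^ q ^ (a + b) := by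
    intro y a b; rw [← pow_mul, ← pow_add]
  have hcollapse : ∀ (y : K) (d : ℕ), y ^ q ^ (h + d) = y ^ q ^ d := by
    intro y d
    rw [add_comm, pow_add, pow_mul, hKfix (y ^ q ^ d)]
  -- the family of points and its injectivity
  set F : Fin j ⊕ (Fin (k - j) × Fin h) → K := fun b =>
    match b with
    | Sum.inl x => algebraMap Fq K (t x)
    | Sum.inr (r, s) => α r ^ q ^ (s : ℕ) with hFdef
  have hFinj : Function.Injective F := by
    rintro (x | ⟨r, s⟩) (y | ⟨r', s'⟩) hab
    · exact congrArg Sum.inl (ht (halgInj hab))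
    · exfalso
      simp only [hFdef] at hab
      have h1 : (algebraMap Fq K (t x)) ^ q ^ (h - (s' : ℕ)) =
          (α r' ^ q ^ (s' : ℕ)) ^ q ^ (h - (s' : ℕ)) := by rw [hab]
      rw [hpowpow, Nat.add_sub_cancel' (le_of_lt s'.isLt), hKfix, ← map_pow,
        FiniteField.pow_card_pow] at h1
      exact hα_ne_base r' (t x) h1.symm
    · exfalso
      simp only [hFdef] at hab
      have h1 : (algebraMap Fq K (t y)) ^ q ^ (h - (s : ℕ)) =
          (α r ^ q ^ (s : ℕ)) ^ q ^ (h - (s : ℕ)) := by rw [← hab]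
      rw [hpowpow, Nat.add_sub_cancel' (le_of_lt s.isLt), hKfix, ← map_pow,
        FiniteField.pow_card_pow] at h1
      exact hα_ne_base r (t y) h1.symm
    · simp only [hFdef] at hab
      by_cases hrr : r = r'
      · subst hrr
        -- show s = s'
        rcases lt_trichotomy (s : ℕ) (s' : ℕ) with hss | hss | hss
        · exfalso
          have h1 : (α r ^ q ^ (s : ℕ)) ^ q ^ (h - (s : ℕ)) =
              (α r ^ q ^ (s' : ℕ)) ^ q ^ (h - (s : ℕ)) := by rw [hab]
          rw [hpowpow, hpowpow, Nat.add_sub_cancel' (le_of_lt s.isLt), hKfix] at h1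
          have h2 : (s' : ℕ) + (h - (s : ℕ)) = h + ((s' : ℕ) - (s : ℕ)) := by omega
          rw [h2, hcollapse] at h1
          exact hgenfix r _ (by omega) (by omega) h1.symm
        · exact congrArg Sum.inr (Prod.ext rfl (Fin.ext hss))
        · exfalso
          have h1 : (α r ^ q ^ (s : ℕ)) ^ q ^ (h - (s' : ℕ)) =
              (α r ^ q ^ (s' : ℕ)) ^ q ^ (h - (s' : ℕ)) := by rw [hab]
          rw [hpowpow, hpowpow, Nat.add_sub_cancel' (le_of_lt s'.isLt), hKfix] at h1
          have h2 : (s : ℕ) + (h - (s' : ℕ)) = h + ((s : ℕ) - (s' : ℕ)) := by omega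
          rw [h2, hcollapse] at h1
          exact hgenfix r _ (by omega) (by omega) h1
      · exfalso
        have h1 : (α r ^ q ^ (s : ℕ)) ^ q ^ (h - (s : ℕ)) =
            (α r' ^ q ^ (s' : ℕ)) ^ q ^ (h - (s : ℕ)) := by rw [hab]
        rw [hpowpow, hpowpow, Nat.add_sub_cancel' (le_of_lt s.isLt), hKfix] at h1
        exact horb r r' hrr _ h1
  -- main determinant argument
  refine isUnit_iff_ne_zero.mpr fun hdet => ?_
  obtain ⟨v, hv0, hvM⟩ := (Matrix.exists_mulVec_eq_zero_iff).mpr hdet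
  -- the polynomial
  set P : K[X] := ∑ i : Fin (h * k), C (v i) * X ^ (i : ℕ) with hPdef
  have hhk0 : 0 < h * k := Nat.mul_pos (by omega) hk0
  have hPdeg : P.degree < (h * k : ℕ) := by
    apply lt_of_le_of_lt (degree_sum_le _ _)
    rw [Finset.sup_lt_iff (by exact_mod_cast (WithBot.bot_lt_coe (h * k)))]
    intro i _
    exact lt_of_le_of_lt (degree_C_mul_X_pow_le _ _) (by exact_mod_cast i.isLt)
  have hPcoeff : ∀ i : Fin (h * k), P.coeff (i : ℕ) = v i := by
    intro i
    rw [hPdef, finset_sum_coeff]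
    rw [Finset.sum_eq_single i]
    · simp [coeff_C_mul, coeff_X_pow]
    · intro b _ hb
      simp only [coeff_C_mul, coeff_X_pow]
      rw [if_neg fun hEq => hb (Fin.ext hEq.symm), mul_zero]
    · intro hi; exact absurd (Finset.mem_univ i) hi
  have hP0 : P ≠ 0 := by
    intro hz
    apply hv0
    funext i
    rw [← hPcoeff i, hz, coeff_zero]
    rfl
  -- row equations
  have hrowl : ∀ (x : Fin j) (ℓ : Fin h), ∑ i : Fin (h * k),
      (if (i : ℕ) < (ℓ : ℕ) then 0
        else (∏ s ∈ Finset.range (ℓ : ℕ), (((i : ℕ) - s : ℕ) : K)) *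
          (algebraMap Fq K (t x)) ^ ((i : ℕ) - (ℓ : ℕ))) * v i = 0 := by
    intro x ℓ
    have := congrFun hvM (e (Sum.inl (x, ℓ)))
    simpa [Matrix.mulVec, dotProduct, Equiv.symm_apply_apply] using this
  have hrowr : ∀ (r : Fin (k - j)) (s : Fin h), ∑ i : Fin (h * k),
      α r ^ ((i : ℕ) * q ^ (s : ℕ)) * v i = 0 := by
    intro r s
    have := congrFun hvM (e (Sum.inr (r, s)))
    simpa [Matrix.mulVec, dotProduct, Equiv.symm_apply_apply] using this
  -- vanishing of iterated derivatives at the t's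
  have hder : ∀ (x : Fin j) (ℓ : Fin h),
      (derivative^[(ℓ : ℕ)] P).IsRoot (algebraMap Fq K (t x)) := by
    intro x ℓ
    have hr := hrowl x ℓ
    rw [IsRoot, hPdef]
    rw [iterate_derivative_sum]
    rw [eval_finset_sum]
    rw [← hr]
    apply Finset.sum_congr rfl
    intro i _
    rw [iterate_derivative_C_mul, iterate_derivative_X_pow_eq_C_mul, eval_mul, eval_C,
      eval_mul, eval_C, eval_pow, eval_X]
    by_cases hiℓ : (i : ℕ) < (ℓ : ℕ)
    · rw [if_pos hiℓ, Nat.descFactorial_eq_zero_iff_lt.mpr hiℓ]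
      simp
    · rw [if_neg hiℓ, Nat.descFactorial_eq_prod_range, Nat.cast_prod]
      ring
  -- vanishing at the conjugates
  have hαroot : ∀ (r : Fin (k - j)) (s : Fin h), P.IsRoot (α r ^ q ^ (s : ℕ)) := by
    intro r s
    have hr := hrowr r s
    rw [IsRoot, hPdef, eval_finset_sum, ← hr]
    apply Finset.sum_congr rfl
    intro i _
    have hpm : α r ^ ((i : ℕ) * q ^ (s : ℕ)) = (α r ^ q ^ (s : ℕ)) ^ (i : ℕ) := by
      rw [← pow_mul, mul_comm]
    rw [hpm, eval_mul, eval_C, eval_pow, eval_X, mul_comm]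
  -- multiplicity bounds
  have hfactne : ((h - 1).factorial : K) ≠ 0 := by
    rw [Ne, CharP.cast_eq_zero_iff K p]
    intro hdvd
    have := (Nat.Prime.dvd_factorial hp).mp hdvd
    omega
  have hmult : ∀ x : Fin j, h ≤ P.rootMultiplicity (algebraMap Fq K (t x)) := by
    intro x
    have := lt_rootMultiplicity_of_isRoot_iterate_derivative_of_mem_nonZeroDivisors hP0
      (fun m hm => hder x ⟨m, by omega⟩)
      (mem_nonZeroDivisors_of_ne_zero hfactne)
    omega
  have hmultα : ∀ (r : Fin (k - j)) (s : Fin h),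
      1 ≤ P.rootMultiplicity (α r ^ q ^ (s : ℕ)) := by
    intro r s
    exact (rootMultiplicity_pos hP0).mpr (hαroot r s)
  -- root-counting multiset
  set m : (Fin j ⊕ (Fin (k - j) × Fin h)) → ℕ := fun b =>
    match b with | Sum.inl _ => h | Sum.inr _ => 1 with hmdef
  have hmF : ∀ b, m b ≤ P.rootMultiplicity (F b) := by
    rintro (x | ⟨r, s⟩)
    · exact hmult x
    · exact hmultα r s
  set R : Multiset K := ∑ b : Fin j ⊕ (Fin (k - j) × Fin h),
    Multiset.replicate (m b) (F b) with hRdef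
  have hRle : R ≤ P.roots := by
    rw [Multiset.le_iff_count]
    intro x
    rw [hRdef, Multiset.count_sum']
    by_cases hx : ∃ b, F b = x
    · obtain ⟨b0, rfl⟩ := hx
      rw [Finset.sum_eq_single b0]
      · rw [Multiset.count_replicate, if_pos rfl, count_roots]
        exact hmF b0
      · intro b _ hb
        rw [Multiset.count_replicate, if_neg (fun hEq => hb (hFinj hEq))]
      · simp
    · rw [Finset.sum_eq_zero]
      · exact Nat.zero_le _
      · intro b _
        rw [Multiset.count_replicate, if_neg (fun hEq => hx ⟨b, hEq⟩)]
  have hRcard : Multiset.card R = h * k := by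
    rw [hRdef, Multiset.card_sum]
    simp only [Multiset.card_replicate]
    rw [Fintype.sum_sum_type]
    have h1 : ∑ x : Fin j, m (Sum.inl x) = j * h := by
      simp [hmdef, Finset.sum_const, Finset.card_univ, smul_eq_mul]
    have h2 : ∑ rs : Fin (k - j) × Fin h, m (Sum.inr rs) = (k - j) * h := by
      simp [hmdef, Finset.sum_const, Finset.card_univ, smul_eq_mul]
    rw [h1, h2, ← add_mul, Nat.add_sub_cancel' hj, mul_comm]
  have hfinal : (h * k : ℕ) ≤ P.natDegree := by
    calc (h * k : ℕ) = Multiset.card R := hRcard.symm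
      _ ≤ Multiset.card P.roots := Multiset.card_le_card hRle
      _ ≤ P.natDegree := card_roots' _
  have : P.natDegree < h * k := (natDegree_lt_iff_degree_lt hP0).mpr hPdeg
  exact absurd hfinal (not_le.mpr this)
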